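/- Let U be a universal operator on a separable infinite-dimensional complex Hilbert space H. Then there exist r > 0 and a holomorphic (analytic) map z ↦ y_z from the open disk B(0,r) ⊆ ℂ into H such that y_z ≠ 0 and U y_z = z • y_z for every z ∈ B(0,r). -/

import Mathlib

noncomputable section

namespace UnivAux

open Metric
open scoped ENNReal lp

abbrev E : Type := lp (fun _ : ℕ => ℂ) 2

lemma two_pos' : 0 < ((2:ℝ≥0∞)).toReal := by norm_num

lemma memℓp_shift (f : E) : Memℓp (fun n => f (n+1)) 2 := by
  apply memℓp_gen
  have h := (lp.memℓp f).summable two_pos'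
  exact h.comp_injective Nat.succ_injective

def shiftL : E →ₗ[ℂ] E where
  toFun f := ⟨fun n => f (n+1), memℓp_shift f⟩
  map_add' _ _ := rfl
  map_smul' _ _ := rfl

def shift : E →L[ℂ] E :=
  shiftL.mkContinuous 1 (fun f => by
    rw [one_mul]
    apply lp.norm_le_of_tsum_le two_pos' (norm_nonneg f)
    rw [lp.norm_rpow_eq_tsum two_pos' f]
    refine Summable.tsum_le_tsum_of_inj Nat.succ Nat.succ_injective
      (fun n _ => Real.rpow_nonneg (norm_nonneg _) _) (fun n => le_rfl)
      ((lp.memℓp f).summable two_pos' |>.comp_injective Nat.succ_injective)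
      ((lp.memℓp f).summable two_pos'))

@[simp] lemma shift_apply (f : E) (n : ℕ) : shift f n = f (n+1) := rfl

def eval0 : E →L[ℂ] ℂ :=
  LinearMap.mkContinuous
    { toFun := fun f : E => f 0
      map_add' := fun _ _ => rfl
      map_smul' := fun _ _ => rfl } 1
    (fun f => by rw [one_mul]; exact lp.norm_apply_le_norm two_ne_zero f 0)

@[simp] lemma eval0_apply (f : E) : eval0 f = f 0 := rfl

def δ (n : ℕ) : E := lp.single 2 n (1:ℂ)

lemma δ_apply_self (n : ℕ) : δ n n = 1 := lp.single_apply_self _ _ _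
lemma δ_apply_ne (n : ℕ) {j : ℕ} (h : j ≠ n) : δ n j = 0 := lp.single_apply_ne _ _ _ h

def Y (z : ℂ) : E := ∑' n : ℕ, z ^ n • δ n

lemma norm_term (z : ℂ) (n : ℕ) : ‖z ^ n • δ n‖ = ‖z‖ ^ n := by
  have h : ‖δ n‖ = 1 := by
    have := lp.norm_single (E := fun _ : ℕ => ℂ) (p := 2) (by norm_num) n (1:ℂ)
    simpa [δ] using this
  rw [norm_smul, norm_pow, h, mul_one]

lemma summable_Y {z : ℂ} (hz : ‖z‖ < 1) : Summable (fun n : ℕ => z ^ n • δ n) := by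
  apply Summable.of_norm
  simp only [norm_term]
  exact summable_geometric_of_lt_one (norm_nonneg z) hz

lemma hasSum_Y {z : ℂ} (hz : ‖z‖ < 1) :
    HasSum (fun n : ℕ => z ^ n • δ n) (Y z) := (summable_Y hz).hasSum

lemma eval0_Y {z : ℂ} (hz : ‖z‖ < 1) : eval0 (Y z) = 1 := by
  have h1 : HasSum (fun n : ℕ => eval0 (z ^ n • δ n)) (eval0 (Y z)) :=
    (hasSum_Y hz).mapL eval0
  have h2 : HasSum (fun n : ℕ => eval0 (z ^ n • δ n)) 1 := by
    have := hasSum_single (f := fun n : ℕ => eval0 (z ^ n • δ n)) 0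
      (fun b hb => by simp [δ_apply_ne b (Ne.symm hb)])
    simpa [δ_apply_self] using this
  exact h1.unique h2

lemma Y_ne_zero {z : ℂ} (hz : ‖z‖ < 1) : Y z ≠ 0 := by
  intro h
  have := eval0_Y hz
  rw [h] at this
  simp at this

lemma shift_δ_succ (n : ℕ) : shift (δ (n+1)) = δ n := by
  ext j
  rw [shift_apply]
  by_cases h : j = n
  · subst h; rw [δ_apply_self, δ_apply_self]
  · rw [δ_apply_ne n h, δ_apply_ne (n+1) (by omega)]

lemma shift_δ_zero : shift (δ 0) = 0 := by
  ext j
  rw [shift_apply, δ_apply_ne 0 (by omega)]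
  simp

lemma shift_Y {z : ℂ} (hz : ‖z‖ < 1) : shift (Y z) = z • Y z := by
  have h1 : HasSum (fun n : ℕ => shift (z ^ n • δ n)) (shift (Y z)) :=
    (hasSum_Y hz).mapL shift
  have h3 : HasSum (fun n : ℕ => z ^ (n+1) • δ n) (shift (Y z)) := by
    have h2 := (hasSum_nat_add_iff' (f := fun n : ℕ => shift (z ^ n • δ n)) 1).2 h1
    simp only [Finset.range_one, Finset.sum_singleton, pow_zero, one_smul,
      shift_δ_zero, sub_zero, map_smul, shift_δ_succ] at h2
    exact h2
  have h4 : HasSum (fun n : ℕ => z ^ (n+1) • δ n) (z • Y z) := by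
    have := (hasSum_Y hz).const_smul z
    simpa [smul_smul, ← pow_succ'] using this
  exact h3.unique h4

lemma Y_diff : DifferentiableOn ℂ Y (ball (0:ℂ) (3/4)) := by
  have : DifferentiableOn ℂ (fun z : ℂ => ∑' n : ℕ, z ^ n • δ n) (ball (0:ℂ) (3/4)) := by
    refine Complex.differentiableOn_tsum_of_summable_norm
      (u := fun n : ℕ => (3/4 : ℝ) ^ n)
      (summable_geometric_of_lt_one (by norm_num) (by norm_num))
      (fun n => ((differentiable_pow n).smul_const (δ n)).differentiableOn)
      isOpen_ball
      (fun n w hw => ?_)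
    rw [norm_term]
    have hw' : ‖w‖ < 3/4 := by simpa [dist_eq_norm] using hw
    exact pow_le_pow_left₀ (norm_nonneg w) hw'.le n
  exact this

section Basis
variable {H : Type*} [NormedAddCommGroup H] [InnerProductSpace ℂ H]
  [CompleteSpace H] [TopologicalSpace.SeparableSpace H]

lemma exists_nat_hilbertBasis (hinf : ¬ FiniteDimensional ℂ H) :
    Nonempty (HilbertBasis ℕ ℂ H) := by
  obtain ⟨w, b, hb⟩ := exists_hilbertBasis ℂ H
  have hdist : ∀ x ∈ w, ∀ y ∈ w, x ≠ y → (1:ℝ) ≤ dist x y := by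
    intro x hx y hy hxy
    have hden : (⟨x, hx⟩ : w) ≠ ⟨y, hy⟩ := by simpa using hxy
    have h1 : ‖x‖ = 1 := by
      have := b.orthonormal.1 ⟨x, hx⟩; rwa [hb] at this
    have h2 : ‖y‖ = 1 := by
      have := b.orthonormal.1 ⟨y, hy⟩; rwa [hb] at this
    have h3 : (inner ℂ x y : ℂ) = 0 := by
      have := b.orthonormal.2 hden; rwa [hb] at this
    have h4 : ‖x - y‖ ^ 2 = 2 := by
      rw [@norm_sub_sq ℂ, h1, h2, h3]
      norm_num
    rw [dist_eq_norm]
    nlinarith [norm_nonneg (x - y)]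
  have hw_count : w.Countable := by
    have hd : w.PairwiseDisjoint (fun x => ball x (1/2 : ℝ)) := by
      intro x hx y hy hxy
      exact ball_disjoint_ball (by linarith [hdist x hx y hy hxy])
    exact hd.countable_of_isOpen (fun _ _ => isOpen_ball)
      (fun x _ => nonempty_ball.2 (by norm_num))
  have hw_inf : w.Infinite := by
    by_contra hfin
    rw [Set.not_infinite] at hfin
    apply hinf
    haveI : FiniteDimensional ℂ (Submodule.span ℂ w) := FiniteDimensional.span_of_finite ℂ hfin
    have hclosed : IsClosed ((Submodule.span ℂ w : Submodule ℂ H) : Set H) :=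
      Submodule.closed_of_finiteDimensional _
    have hdense := b.dense_span
    rw [hb, Subtype.range_coe] at hdense
    have htop : (Submodule.span ℂ w : Submodule ℂ H) = ⊤ := by
      rwa [hclosed.submodule_topologicalClosure_eq] at hdense
    have : FiniteDimensional ℂ (⊤ : Submodule ℂ H) := htop ▸ inferInstance
    exact (Submodule.topEquiv (R := ℂ) (M := H)).finiteDimensional
  haveI := hw_count.to_subtype
  haveI := hw_inf.to_subtype
  haveI : Denumerable ↥w := (nonempty_denumerable ↥w).some
  let e : ℕ ≃ ↥w := (Denumerable.eqv ↥w).symm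
  have hv : Orthonormal ℂ (⇑b ∘ ⇑e) := b.orthonormal.comp e e.injective
  refine ⟨HilbertBasis.mk hv ?_⟩
  have hrange : Set.range (⇑b ∘ ⇑e) = Set.range ⇑b := by
    rw [Set.range_comp, e.surjective.range_eq, Set.image_univ]
  rw [hrange]
  exact b.dense_span.ge

end Basis

end UnivAux

open UnivAux Metric

/-- Universal operator on a complex Hilbert space. -/
def IsUniversal {H : Type*} [NormedAddCommGroup H] [InnerProductSpace ℂ H]
    (U : H →L[ℂ] H) : Prop :=
  ∀ T : H →L[ℂ] H, ∃ M : Submodule ℂ H, IsClosed (M : Set H) ∧ (∀ x ∈ M, U x ∈ M) ∧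
    ∃ c : ℂ, c ≠ 0 ∧ ∃ J : H ≃L[ℂ] M, ∀ x : H, U (J x : H) = c • ((J (T x) : H))

/-- If `U` is universal then there exist `r > 0` and a holomorphic map `z ↦ y z` on the
open disk `B(0,r)` with values in `H` such that `y z ≠ 0` and `U (y z) = z • y z` for all
`z ∈ B(0,r)`. -/
theorem holomorphic_eigenvector_field_of_universal {H : Type*} [NormedAddCommGroup H]
    [InnerProductSpace ℂ H] [CompleteSpace H] [TopologicalSpace.SeparableSpace H]
    (hinf : ¬ FiniteDimensional ℂ H)
    (U : H →L[ℂ] H) (hU : IsUniversal U) :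
    ∃ r : ℝ, 0 < r ∧ ∃ y : ℂ → H,
      DifferentiableOn ℂ y (Metric.ball (0 : ℂ) r) ∧
      ∀ z ∈ Metric.ball (0 : ℂ) r, y z ≠ 0 ∧ U (y z) = z • y z := by
  obtain ⟨b⟩ := exists_nat_hilbertBasis hinf
  let L : H ≃ₗᵢ[ℂ] E := b.repr
  let T : H →L[ℂ] H :=
    ((L.symm.toContinuousLinearEquiv : E ≃L[ℂ] H) : E →L[ℂ] H).comp
      (shift.comp ((L.toContinuousLinearEquiv : H ≃L[ℂ] E) : H →L[ℂ] E))
  have hT : ∀ x : H, T x = L.symm (shift (L x)) := fun x => rfl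
  obtain ⟨M, _hMc, _hMi, c, hc, J, hJ⟩ := hU T
  have hcpos : 0 < ‖c‖ := norm_pos_iff.2 hc
  have hz' : ∀ w : ℂ, w ∈ ball (0:ℂ) (‖c‖/2) → ‖w / c‖ < 1/2 := by
    intro w hw
    rw [mem_ball, dist_zero_right] at hw
    rw [norm_div, div_lt_iff₀ hcpos]
    linarith
  refine ⟨‖c‖/2, by positivity, fun w => ((J (L.symm (Y (w/c))) : M) : H), ?_, ?_⟩
  · have hmaps : Set.MapsTo (fun w : ℂ => w / c) (ball (0:ℂ) (‖c‖/2)) (ball (0:ℂ) (3/4)) := by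
      intro w hw
      rw [mem_ball, dist_zero_right]
      linarith [hz' w hw]
    have hYc : DifferentiableOn ℂ (fun w => Y (w/c)) (ball (0:ℂ) (‖c‖/2)) :=
      Y_diff.comp ((differentiable_id.div_const c).differentiableOn) hmaps
    let g : E →L[ℂ] H := M.subtypeL.comp ((J : H →L[ℂ] M).comp
      ((L.symm.toContinuousLinearEquiv : E ≃L[ℂ] H) : E →L[ℂ] H))
    exact g.differentiable.comp_differentiableOn hYc
  · intro w hw
    have hz : ‖w / c‖ < 1 := by linarith [hz' w hw]
    have hx : T (L.symm (Y (w/c))) = (w/c) • L.symm (Y (w/c)) := by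
      rw [hT, L.apply_symm_apply, shift_Y hz, map_smul]
    constructor
    · intro h0
      apply Y_ne_zero hz
      have h1 : J (L.symm (Y (w/c))) = 0 := Submodule.coe_eq_zero.mp h0
      have h2 : L.symm (Y (w/c)) = 0 := J.map_eq_zero_iff.mp h1
      simpa using h2
    · have h2 := hJ (L.symm (Y (w/c)))
      rw [hx, map_smul] at h2
      rw [h2, Submodule.coe_smul, smul_smul]
      have : c * (w/c) = w := by field_simp
      rw [this]

end
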